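/- Let k be a field of characteristic p > 0, G a finite group, M a kG-module, and R a normal p-subgroup of G acting trivially on M. Then for any subgroup Q ≤ G, the Brauer quotient M(QR), viewed as a k[N_G(Q)]-module by restriction along N_G(Q) ≤ N_G(QR), is isomorphic to the Brauer quotient M(Q) as a k[N_G(Q)]-module. -/

import Mathlib

open Pointwise

variable {k V G : Type*} [Field k] [AddCommGroup V] [Module k V] [Group G]

/-- The subspace of `H`-fixed points `M^H` of a representation `M`. -/
def fixedSub (ρ : Representation k G V) (H : Subgroup G) : Submodule k V where
  carrier := {v | ∀ h ∈ H, ρ h v = v}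
  add_mem' := by intro a b ha hb h hh; simp [map_add, ha h hh, hb h hh]
  zero_mem' := by intro h hh; simp
  smul_mem' := by intro c v hv h hh; rw [LinearMap.map_smul, hv h hh]

/-- The relative trace map `tr_K^H : m ↦ Σ_{g ∈ [H/K]} g·m`, defined via a choice of
left coset representatives of `K` in `H` (on `K`-fixed points it is independent of
this choice). -/
noncomputable def relTrace [Finite G] (ρ : Representation k G V) (K H : Subgroup G) :
    V →ₗ[k] V :=
  letI : Fintype (H ⧸ K.subgroupOf H) := Fintype.ofFinite _
  ∑ x : H ⧸ K.subgroupOf H, ρ (x.out : G)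

/-- The sum `Σ_{T < S} tr_T^S(M^T)` of the images of the relative traces from all
proper subgroups of `S`. -/
noncomputable def traceSum [Finite G] (ρ : Representation k G V) (S : Subgroup G) :
    Submodule k V :=
  ⨆ T : {T : Subgroup G // T < S}, Submodule.map (relTrace ρ T.1 S) (fixedSub ρ T.1)

/-- The Brauer quotient (Brauer construction) `M(S) = M^S / Σ_{T<S} tr_T^S(M^T)`
as a `k`-vector space. -/
noncomputable abbrev BrauerQuotient [Finite G] (ρ : Representation k G V) (S : Subgroup G) :=
  (fixedSub ρ S) ⧸ ((traceSum ρ S).comap (fixedSub ρ S).subtype)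

/-! ### Auxiliary lemmas -/

lemma fixedSub_anti (ρ : Representation k G V) {A B : Subgroup G} (h : A ≤ B) :
    fixedSub ρ B ≤ fixedSub ρ A := fun _ hv a ha => hv a (h ha)

lemma ρ_eq_of_mem {ρ : Representation k G V} {W : Subgroup G} {v : V} (hv : v ∈ fixedSub ρ W)
    {a b : G} (h : a⁻¹ * b ∈ W) : ρ b v = ρ a v := by
  have h1 : a * (a⁻¹ * b) = b := by group
  calc ρ b v = ρ (a * (a⁻¹ * b)) v := by rw [h1]
  _ = ρ a (ρ (a⁻¹ * b) v) := by rw [map_mul]; rfl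
  _ = ρ a v := by rw [hv _ h]

lemma mem_fixedSub_sup {ρ : Representation k G V} {A B : Subgroup G} {v : V}
    (hA : v ∈ fixedSub ρ A) (hB : ∀ b ∈ B, ρ b v = v) : v ∈ fixedSub ρ (A ⊔ B) := by
  let St : Subgroup G :=
    { carrier := {g | ρ g v = v}
      one_mem' := by simp
      mul_mem' := by
        intro a b ha hb
        simp only [Set.mem_setOf_eq] at *
        rw [map_mul, Module.End.mul_apply, hb, ha]
      inv_mem' := by
        intro a ha
        simp only [Set.mem_setOf_eq] at *
        conv_lhs => rw [← ha]
        rw [← Module.End.mul_apply, ← map_mul, inv_mul_cancel, map_one, Module.End.one_apply] }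
  intro h hh
  have h1 : A ≤ St := fun a ha' => hA a ha'
  have h2 : B ≤ St := fun b hb' => hB b hb'
  exact (sup_le h1 h2) hh

lemma relTrace_apply [Finite G] (ρ : Representation k G V) (K H : Subgroup G) (v : V)
    [inst : Fintype (↥H ⧸ K.subgroupOf H)] :
    relTrace ρ K H v = ∑ x : ↥H ⧸ K.subgroupOf H, ρ ((x.out : ↥H) : G) v := by
  rw [relTrace, Subsingleton.elim inst (Fintype.ofFinite _)]
  simp [LinearMap.sum_apply]

/-- Comparing the trace from `S` to `Q` with the trace from `S ⊔ R'` to `Q ⊔ R'`,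
when `R'` is normal and `R' ⊓ Q ≤ S`, on vectors fixed by `S ⊔ R'`. -/
lemma trace_congr [Finite G] (ρ : Representation k G V) {S Q R' : Subgroup G}
    (hSQ : S ≤ Q) (hR : R'.Normal) (hRQ : R' ⊓ Q ≤ S) {v : V}
    (hv : v ∈ fixedSub ρ (S ⊔ R')) :
    relTrace ρ S Q v = relTrace ρ (S ⊔ R') (Q ⊔ R') v := by
  haveI := hR
  letI : Fintype (↥Q ⧸ S.subgroupOf Q) := Fintype.ofFinite _
  letI : Fintype (↥(Q ⊔ R') ⧸ (S ⊔ R').subgroupOf (Q ⊔ R')) := Fintype.ofFinite _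
  set ι : ↥Q → ↥(Q ⊔ R') := fun q => ⟨(q : G), (le_sup_left : Q ≤ Q ⊔ R') q.2⟩ with hι
  have hcompat : ∀ a b : ↥Q, QuotientGroup.leftRel (S.subgroupOf Q) a b →
      QuotientGroup.leftRel ((S ⊔ R').subgroupOf (Q ⊔ R')) (ι a) (ι b) := by
    intro a b hab
    rw [QuotientGroup.leftRel_apply] at hab ⊢
    have : ((a : G)⁻¹ * b) ∈ S := hab
    simp only [Subgroup.mem_subgroupOf]
    exact (le_sup_left : S ≤ S ⊔ R') (show ((ι a : G)⁻¹ * (ι b : G)) ∈ S from this)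
  set φ : (↥Q ⧸ S.subgroupOf Q) → (↥(Q ⊔ R') ⧸ (S ⊔ R').subgroupOf (Q ⊔ R')) :=
    Quotient.map' ι (hcompat) with hφ
  have hbij : Function.Bijective φ := by
    constructor
    · intro x y
      refine Quotient.inductionOn₂' x y fun a b h => ?_
      have h' : ((ι a : G))⁻¹ * (ι b : G) ∈ S ⊔ R' := by
        have := Quotient.exact' h
        rw [QuotientGroup.leftRel_apply] at this
        exact this
      apply Quotient.sound'
      rw [QuotientGroup.leftRel_apply]
      show a⁻¹ * b ∈ S.subgroupOf Q
      rw [Subgroup.mem_subgroupOf]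
      have hmem : (a : G)⁻¹ * (b : G) ∈ S ⊔ R' := h'
      have hQ : (a : G)⁻¹ * (b : G) ∈ Q := mul_mem (inv_mem a.2) b.2
      have : ((a : G)⁻¹ * (b : G)) ∈ ((S : Set G) * (R' : Set G)) := by
        rw [← Subgroup.mul_normal]; exact hmem
      obtain ⟨s, hs, r, hr, hsr⟩ := this
      have hrQ : r ∈ Q := by
        have : r = s⁻¹ * ((a : G)⁻¹ * (b : G)) := by rw [← hsr]; group
        rw [this]; exact mul_mem (inv_mem (hSQ hs)) hQ
      have hrS : r ∈ S := hRQ ⟨hr, hrQ⟩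
      have hfin : (a : G)⁻¹ * (b : G) ∈ S := by rw [← hsr]; exact mul_mem hs hrS
      simpa using hfin
    · intro y
      refine Quotient.inductionOn' y fun g => ?_
      have hg : (g : G) ∈ ((Q : Set G) * (R' : Set G)) := by
        rw [← Subgroup.mul_normal]; exact g.2
      obtain ⟨q, hq, r, hr, hqr⟩ := hg
      refine ⟨Quotient.mk'' ⟨q, hq⟩, ?_⟩
      show Quotient.mk'' (ι ⟨q, hq⟩) = Quotient.mk'' g
      apply Quotient.sound'
      rw [QuotientGroup.leftRel_apply]
      rw [Subgroup.mem_subgroupOf]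
      have hre : (q : G)⁻¹ * (g : G) = r := by rw [← hqr]; group
      have hfin : (q : G)⁻¹ * (g : G) ∈ S ⊔ R' := by
        rw [hre]; exact (le_sup_right : R' ≤ S ⊔ R') hr
      simpa using hfin
  set e : (↥Q ⧸ S.subgroupOf Q) ≃ (↥(Q ⊔ R') ⧸ (S ⊔ R').subgroupOf (Q ⊔ R')) :=
    Equiv.ofBijective φ hbij with he
  rw [relTrace_apply, relTrace_apply]
  rw [← Equiv.sum_comp e (fun y => ρ ((y.out : ↥(Q ⊔ R')) : G) v)]
  apply Finset.sum_congr rfl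
  intro x _
  have hex : (e x) = Quotient.mk'' (ι x.out) := by
    show φ x = _
    conv_lhs => rw [← Quotient.out_eq' x]
    rw [hφ, Quotient.map'_mk'']
  have : ((e x).out : ↥(Q ⊔ R'))⁻¹ * (ι x.out) ∈ (S ⊔ R').subgroupOf (Q ⊔ R') := by
    have h2 : (Quotient.mk'' ((e x).out) : ↥(Q ⊔ R') ⧸ (S ⊔ R').subgroupOf (Q ⊔ R')) =
        Quotient.mk'' (ι x.out) := by
      rw [Quotient.out_eq']; exact hex
    have := Quotient.exact' h2
    rwa [QuotientGroup.leftRel_apply] at this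
  rw [Subgroup.mem_subgroupOf] at this
  have heq : ρ ((ι x.out : ↥(Q ⊔ R')) : G) v = ρ (((e x).out : ↥(Q ⊔ R')) : G) v :=
    ρ_eq_of_mem hv (by exact_mod_cast this)
  have hι2 : ((ι x.out : ↥(Q ⊔ R')) : G) = ((x.out : ↥Q) : G) := rfl
  rw [hι2] at heq
  rw [heq]

/-- If `p` divides the relative index of `K` in `L` and `v` is fixed by `L`, then the
trace of `v` from `K` up to any `H ⊇ L` vanishes (in characteristic `p`). -/
lemma trace_zero {p : ℕ} (hp : p.Prime) [CharP k p] [Finite G] (ρ : Representation k G V)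
    {K L H : Subgroup G} (hKL : K ≤ L) (hLH : L ≤ H)
    (hdvd : p ∣ K.relIndex L) {v : V} (hv : v ∈ fixedSub ρ L) :
    relTrace ρ K H v = 0 := by
  letI : Fintype (↥H ⧸ K.subgroupOf H) := Fintype.ofFinite _
  letI : Fintype (↥H ⧸ L.subgroupOf H) := Fintype.ofFinite _
  letI : Fintype (↥(L.subgroupOf H) ⧸ (K.subgroupOf H).subgroupOf (L.subgroupOf H)) :=
    Fintype.ofFinite _
  have h' : K.subgroupOf H ≤ L.subgroupOf H := fun x hx => hKL hx
  set e := Subgroup.quotientEquivProdOfLE h' with he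
  rw [relTrace_apply]
  have key : ∀ x : ↥H ⧸ K.subgroupOf H,
      ρ ((x.out : ↥H) : G) v = ρ (((e x).1.out : ↥H) : G) v := by
    intro x
    refine ρ_eq_of_mem hv ?_
    have h1 : (e x).1 = (Quotient.mk'' x.out : ↥H ⧸ L.subgroupOf H) := by
      conv_lhs => rw [← Quotient.out_eq' x]
      rfl
    have h2 : (Quotient.mk'' ((e x).1.out) : ↥H ⧸ L.subgroupOf H) = Quotient.mk'' x.out := by
      rw [Quotient.out_eq']; exact h1
    have h3 := Quotient.exact' h2
    rw [QuotientGroup.leftRel_apply] at h3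
    exact_mod_cast h3
  rw [Finset.sum_congr rfl (fun x _ => key x)]
  rw [Equiv.sum_comp e (fun y => ρ (((y.1.out : ↥H)) : G) v)]
  rw [Fintype.sum_prod_type]
  have hcard : ((Fintype.card
      (↥(L.subgroupOf H) ⧸ (K.subgroupOf H).subgroupOf (L.subgroupOf H))) : k) = 0 := by
    rw [← Nat.card_eq_fintype_card]
    have : Nat.card (↥(L.subgroupOf H) ⧸ (K.subgroupOf H).subgroupOf (L.subgroupOf H)) =
        K.relIndex L := by
      rw [← Subgroup.relIndex_subgroupOf hLH]
      rfl
    rw [this, CharP.cast_eq_zero_iff k p]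
    exact hdvd
  have inner : ∀ y : ↥H ⧸ L.subgroupOf H,
      (∑ _z : ↥(L.subgroupOf H) ⧸ (K.subgroupOf H).subgroupOf (L.subgroupOf H),
        ρ ((y.out : ↥H) : G) v) = 0 := by
    intro y
    rw [Finset.sum_const, Finset.card_univ, ← Nat.cast_smul_eq_nsmul k, hcard, zero_smul]
  rw [Finset.sum_congr rfl (fun y _ => inner y), Finset.sum_const_zero]

/-- Decomposition `S ⊔ N ⊆ N * S` when `S` normalizes `N`. -/
lemma sup_decomp {S N : Subgroup G} (hSN : S ≤ Subgroup.normalizer (N : Set G)) {g : G} (hg : g ∈ S ⊔ N) :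
    ∃ n ∈ N, ∃ s ∈ S, g = n * s := by
  have hcl : S ⊔ N = Subgroup.closure ((S : Set G) ∪ (N : Set G)) := by
    rw [Subgroup.closure_union, Subgroup.closure_eq, Subgroup.closure_eq]
  rw [hcl] at hg
  induction hg using Subgroup.closure_induction with
  | mem x hx =>
    rcases hx with hx | hx
    · exact ⟨1, one_mem N, x, hx, (one_mul x).symm⟩
    · exact ⟨x, hx, 1, one_mem S, (mul_one x).symm⟩
  | one => exact ⟨1, one_mem N, 1, one_mem S, (one_mul 1).symm⟩
  | mul x y hx hy ihx ihy =>
    obtain ⟨n, hn, s, hs, rfl⟩ := ihx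
    obtain ⟨n', hn', s', hs', rfl⟩ := ihy
    have hconj : s * n' * s⁻¹ ∈ N := by
      have := hSN hs
      rw [Subgroup.mem_normalizer_iff] at this
      exact (this n').mp hn'
    exact ⟨n * (s * n' * s⁻¹), mul_mem hn hconj, s * s', mul_mem hs hs', by group⟩
  | inv x hx ihx =>
    obtain ⟨n, hn, s, hs, rfl⟩ := ihx
    have hconj : s⁻¹ * n⁻¹ * s ∈ N := by
      have := hSN (inv_mem hs)
      rw [Subgroup.mem_normalizer_iff] at this
      simpa using (this n⁻¹).mp (inv_mem hn)
    exact ⟨s⁻¹ * n⁻¹ * s, hconj, s⁻¹, inv_mem hs, by group⟩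

/-- If `N` is a `p`-group normalized by `S` and not contained in `S`, then `p` divides
the relative index of `S` in `S ⊔ N`. -/
lemma dvd_relindex_sup {p : ℕ} (hp : p.Prime) [Finite G] {S N : Subgroup G}
    (hSN : S ≤ Subgroup.normalizer (N : Set G)) (hnle : ¬ N ≤ S) (hNp : IsPGroup p N) :
    p ∣ S.relIndex (S ⊔ N) := by
  set ι : ↥N → ↥(S ⊔ N) := fun n => ⟨(n : G), (le_sup_right : N ≤ S ⊔ N) n.2⟩ with hι
  have hcompat : ∀ a b : ↥N, QuotientGroup.leftRel ((S ⊓ N).subgroupOf N) a b →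
      QuotientGroup.leftRel (S.subgroupOf (S ⊔ N)) (ι a) (ι b) := by
    intro a b hab
    rw [QuotientGroup.leftRel_apply] at hab ⊢
    have h1 : ((a : G)⁻¹ * b) ∈ S ⊓ N := hab
    rw [Subgroup.mem_subgroupOf]
    exact h1.1
  set φ : (↥N ⧸ (S ⊓ N).subgroupOf N) → (↥(S ⊔ N) ⧸ S.subgroupOf (S ⊔ N)) :=
    Quotient.map' ι hcompat with hφ
  have hbij : Function.Bijective φ := by
    constructor
    · intro x y
      refine Quotient.inductionOn₂' x y fun a b h => ?_
      have h' : ((ι a : G))⁻¹ * (ι b : G) ∈ S := by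
        have := Quotient.exact' h
        rw [QuotientGroup.leftRel_apply] at this
        exact this
      apply Quotient.sound'
      rw [QuotientGroup.leftRel_apply]
      rw [Subgroup.mem_subgroupOf]
      have hN : (a : G)⁻¹ * (b : G) ∈ N :=
        mul_mem (inv_mem (SetLike.coe_mem a)) (SetLike.coe_mem b)
      have hfin : (a : G)⁻¹ * (b : G) ∈ S ⊓ N := ⟨h', hN⟩
      simpa using hfin
    · intro y
      refine Quotient.inductionOn' y fun g => ?_
      obtain ⟨n, hn, s, hs, hgns⟩ := sup_decomp hSN g.2
      refine ⟨Quotient.mk'' ⟨n, hn⟩, ?_⟩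
      show Quotient.mk'' (ι ⟨n, hn⟩) = Quotient.mk'' g
      apply Quotient.sound'
      rw [QuotientGroup.leftRel_apply, Subgroup.mem_subgroupOf]
      have hfin : (n : G)⁻¹ * (g : G) ∈ S := by
        rw [hgns]; simpa using hs
      simpa using hfin
  have hcard : S.relIndex (S ⊔ N) = (S ⊓ N).relIndex N := by
    have h1 : S.relIndex (S ⊔ N) = Nat.card (↥(S ⊔ N) ⧸ S.subgroupOf (S ⊔ N)) := rfl
    have h2 : (S ⊓ N).relIndex N = Nat.card (↥N ⧸ (S ⊓ N).subgroupOf N) := rfl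
    rw [h1, h2, Nat.card_congr (Equiv.ofBijective φ hbij)]
  rw [hcard]
  have hdvd : (S ⊓ N).relIndex N ∣ Nat.card N := Subgroup.index_dvd_card _
  haveI : Fact p.Prime := ⟨hp⟩
  obtain ⟨n, hn⟩ := (IsPGroup.iff_card).mp hNp
  rw [hn] at hdvd
  obtain ⟨i, hi, hie⟩ := (Nat.dvd_prime_pow hp).mp hdvd
  have hne : (S ⊓ N).relIndex N ≠ 1 := by
    intro hone
    rw [Subgroup.relIndex, Subgroup.index_eq_one, Subgroup.subgroupOf_eq_top] at hone
    exact hnle (fun x hx => (hone hx).1)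
  rcases Nat.eq_zero_or_pos i with hz | hpos
  · rw [hz, pow_zero] at hie; exact absurd hie hne
  · rw [hie]
    exact dvd_pow_self p (Nat.pos_iff_ne_zero.mp hpos)

/-- Let `k` be a field of characteristic `p > 0`, `G` a finite group, `M` a `kG`-module
and `R ⊴ G` a normal `p`-subgroup acting trivially on `M`. Then for `Q ≤ G`, the Brauer
quotient `M(QR)`, viewed as `k[N_G(Q)]`-module by restriction along `N_G(Q) ≤ N_G(QR)`,
is isomorphic to `M(Q)` as a `k[N_G(Q)]`-module: there is a `k`-linear equivalence
induced by the identity on representatives (hence `N_G(Q)`-equivariant, the action of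
`g ∈ N_G(Q)` on both sides being induced by `ρ g`). -/
theorem scott_brauer_quotient_iso {p : ℕ} (hp : p.Prime) [CharP k p] [Finite G]
    (ρ : Representation k G V) (R : Subgroup G) (hRn : R.Normal) (hRp : IsPGroup p R)
    (htriv : ∀ r ∈ R, ∀ v : V, ρ r v = v) (Q : Subgroup G) :
    ∃ e : BrauerQuotient ρ (Q ⊔ R) ≃ₗ[k] BrauerQuotient ρ Q,
      (∀ (v : fixedSub ρ (Q ⊔ R)) (v' : fixedSub ρ Q), (v : V) = (v' : V) →
        e (Submodule.Quotient.mk v) = Submodule.Quotient.mk v') ∧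
      (∀ g ∈ Subgroup.normalizer (Q : Set G), ∀ v ∈ fixedSub ρ (Q ⊔ R), ρ g v ∈ fixedSub ρ (Q ⊔ R)) ∧
      (∀ g ∈ Subgroup.normalizer (Q : Set G), ∀ v ∈ fixedSub ρ Q, ρ g v ∈ fixedSub ρ Q) := by
  haveI := hRn
  -- the fixed subspaces agree
  have hfix : fixedSub ρ (Q ⊔ R) = fixedSub ρ Q := by
    apply le_antisymm
    · exact fixedSub_anti ρ le_sup_left
    · intro v hv
      exact mem_fixedSub_sup hv (fun r hr => htriv r hr v)
  -- the trace sums agree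
  have hts : traceSum ρ (Q ⊔ R) = traceSum ρ Q := by
    apply le_antisymm
    · rw [traceSum]
      apply iSup_le
      rintro ⟨T, hT⟩
      intro w hw
      rw [Submodule.mem_map] at hw
      obtain ⟨v, hvT, rfl⟩ := hw
      by_cases hRT : R ≤ T
      · set S := T ⊓ Q with hS
        have hTS : T = S ⊔ R := by
          apply le_antisymm
          · intro t ht
            have hmem : (t : G) ∈ ((Q : Set G) * (R : Set G)) := by
              rw [← Subgroup.mul_normal]; exact hT.le ht
            obtain ⟨q, hq, r, hr, hqr⟩ := hmem
            have hqT : q ∈ T := by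
              have : q = t * r⁻¹ := by rw [← hqr]; group
              rw [this]; exact mul_mem ht (inv_mem (hRT hr))
            rw [← hqr]
            exact mul_mem ((le_sup_left : S ≤ S ⊔ R) ⟨hqT, hq⟩)
              ((le_sup_right : R ≤ S ⊔ R) hr)
          · exact sup_le inf_le_left hRT
        have hSQ : S < Q := by
          refine lt_of_le_of_ne inf_le_right ?_
          intro h
          have hQT : Q ≤ T := by
            rw [hS] at h
            exact inf_eq_right.mp h
          exact hT.ne (le_antisymm hT.le (sup_le hQT hRT))
        have hRQS : R ⊓ Q ≤ S := fun x hx => ⟨hRT hx.1, hx.2⟩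
        have hvS : v ∈ fixedSub ρ S := fixedSub_anti ρ inf_le_left hvT
        have hvSR : v ∈ fixedSub ρ (S ⊔ R) := by rw [← hTS]; exact hvT
        have htr : relTrace ρ S Q v = relTrace ρ (S ⊔ R) (Q ⊔ R) v :=
          trace_congr ρ inf_le_right hRn hRQS hvSR
        have hres : relTrace ρ T (Q ⊔ R) v = relTrace ρ S Q v := by
          rw [hTS]; exact htr.symm
        rw [hres, traceSum]
        exact Submodule.mem_iSup_of_mem ⟨S, hSQ⟩ (Submodule.mem_map_of_mem hvS)
      · have hvTR : v ∈ fixedSub ρ (T ⊔ R) := mem_fixedSub_sup hvT (fun r hr => htriv r hr v)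
        have hTle : T ≤ Subgroup.normalizer (R : Set G) := by
          rw [Subgroup.normalizer_eq_top_iff.mpr hRn]; exact le_top
        have hdvd : p ∣ T.relIndex (T ⊔ R) := dvd_relindex_sup hp hTle hRT hRp
        rw [trace_zero hp ρ le_sup_left (sup_le hT.le le_sup_right) hdvd hvTR]
        exact zero_mem _
    · rw [traceSum]
      apply iSup_le
      rintro ⟨S, hS⟩
      intro w hw
      rw [Submodule.mem_map] at hw
      obtain ⟨v, hvS, rfl⟩ := hw
      by_cases hRQS : R ⊓ Q ≤ S
      · have hvSR : v ∈ fixedSub ρ (S ⊔ R) := mem_fixedSub_sup hvS (fun r hr => htriv r hr v)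
        have hlt : S ⊔ R < Q ⊔ R := by
          refine lt_of_le_of_ne (sup_le_sup_right hS.le R) ?_
          intro heq
          have hQS : Q ≤ S := by
            intro q hq
            have hmem : (q : G) ∈ ((S : Set G) * (R : Set G)) := by
              rw [← Subgroup.mul_normal, heq]
              exact (le_sup_left : Q ≤ Q ⊔ R) hq
            obtain ⟨s, hs, r, hr, hsr⟩ := hmem
            have hrQ : r ∈ Q := by
              have : r = s⁻¹ * q := by rw [← hsr]; group
              rw [this]; exact mul_mem (inv_mem (hS.le hs)) hq
            have hrS : r ∈ S := hRQS ⟨hr, hrQ⟩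
            rw [← hsr]; exact mul_mem hs hrS
          exact hS.ne (le_antisymm hS.le hQS)
        have htr : relTrace ρ S Q v = relTrace ρ (S ⊔ R) (Q ⊔ R) v :=
          trace_congr ρ hS.le hRn hRQS hvSR
        rw [htr, traceSum]
        exact Submodule.mem_iSup_of_mem ⟨S ⊔ R, hlt⟩ (Submodule.mem_map_of_mem hvSR)
      · set N := R ⊓ Q with hN
        have hvL : v ∈ fixedSub ρ (S ⊔ N) := mem_fixedSub_sup hvS (fun x hx => htriv x hx.1 v)
        have hSN : S ≤ Subgroup.normalizer (N : Set G) := by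
          intro s hs
          have hsQ : s ∈ Q := hS.le hs
          rw [Subgroup.mem_normalizer_iff]
          intro h
          constructor
          · rintro ⟨h1, h2⟩
            have hq1 : s * h * s⁻¹ ∈ Q := mul_mem (mul_mem hsQ h2) (inv_mem hsQ)
            exact ⟨hRn.conj_mem h h1 s, hq1⟩
          · rintro ⟨h1, h2⟩
            have hre : s⁻¹ * (s * h * s⁻¹) * s⁻¹⁻¹ = h := by group
            have hR' : h ∈ R := by
              have := hRn.conj_mem _ h1 s⁻¹
              rwa [hre] at this
            have hQ' : h ∈ Q := by
              have : s⁻¹ * (s * h * s⁻¹) * s⁻¹⁻¹ ∈ Q := by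
                rw [inv_inv]
                exact mul_mem (mul_mem (inv_mem hsQ) h2) hsQ
              rwa [hre] at this
            exact ⟨hR', hQ'⟩
        have hdvd : p ∣ S.relIndex (S ⊔ N) :=
          dvd_relindex_sup hp hSN hRQS (hRp.to_inf_left)
        have hLQ : S ⊔ N ≤ Q := sup_le hS.le inf_le_right
        rw [trace_zero hp ρ le_sup_left hLQ hdvd hvL]
        exact zero_mem _
  -- assemble the equivalence
  set P1 := (traceSum ρ (Q ⊔ R)).comap (fixedSub ρ (Q ⊔ R)).subtype with hP1
  set P2 := (traceSum ρ Q).comap (fixedSub ρ Q).subtype with hP2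
  set f : ↥(fixedSub ρ (Q ⊔ R)) ≃ₗ[k] ↥(fixedSub ρ Q) := LinearEquiv.ofEq _ _ hfix with hf
  have hmap : P1.map (f : ↥(fixedSub ρ (Q ⊔ R)) →ₗ[k] ↥(fixedSub ρ Q)) = P2 := by
    ext x
    rw [hP1, hP2]
    simp only [Submodule.mem_map, Submodule.mem_comap]
    constructor
    · rintro ⟨y, hy, rfl⟩
      have hcoe : ((fixedSub ρ Q).subtype ((f : ↥(fixedSub ρ (Q ⊔ R)) →ₗ[k] ↥(fixedSub ρ Q)) y)) = ((fixedSub ρ (Q ⊔ R)).subtype y) := rfl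
      rw [hcoe, ← hts]
      exact hy
    · intro hx
      refine ⟨⟨(x : V), by rw [hfix]; exact x.2⟩, ?_, ?_⟩
      · show ((x : V)) ∈ traceSum ρ (Q ⊔ R)
        rw [hts]
        exact hx
      · apply Subtype.ext
        rfl
  refine ⟨Submodule.Quotient.equiv P1 P2 f hmap, ?_, ?_, ?_⟩
  · intro v v' hvv'
    have h1 : (Submodule.Quotient.equiv P1 P2 f hmap) (Submodule.Quotient.mk v) =
        Submodule.Quotient.mk (f v) := by
      simp [Submodule.Quotient.equiv, Submodule.mapQ_apply]
    rw [h1]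
    congr 1
    exact Subtype.ext (by rw [← hvv']; rfl)
  · intro g hg v hv
    rw [hfix] at hv ⊢
    intro q hq
    have hconj : g⁻¹ * q * g ∈ Q := by
      rw [Subgroup.mem_normalizer_iff] at hg
      refine (hg (g⁻¹ * q * g)).mpr ?_
      have : g * (g⁻¹ * q * g) * g⁻¹ = q := by group
      rw [this]; exact hq
    calc ρ q (ρ g v) = ρ (q * g) v := by rw [map_mul]; rfl
    _ = ρ (g * (g⁻¹ * q * g)) v := by rw [show g * (g⁻¹ * q * g) = q * g from by group]
    _ = ρ g (ρ (g⁻¹ * q * g) v) := by rw [map_mul]; rfl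
    _ = ρ g v := by rw [hv _ hconj]
  · intro g hg v hv
    intro q hq
    have hconj : g⁻¹ * q * g ∈ Q := by
      rw [Subgroup.mem_normalizer_iff] at hg
      refine (hg (g⁻¹ * q * g)).mpr ?_
      have : g * (g⁻¹ * q * g) * g⁻¹ = q := by group
      rw [this]; exact hq
    calc ρ q (ρ g v) = ρ (q * g) v := by rw [map_mul]; rfl
    _ = ρ (g * (g⁻¹ * q * g)) v := by rw [show g * (g⁻¹ * q * g) = q * g from by group]
    _ = ρ g (ρ (g⁻¹ * q * g) v) := by rw [map_mul]; rfl
    _ = ρ g v := by rw [hv _ hconj]
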